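/- For every γ > -1 with γ ≠ 0, the functionals F_{j,γ}(f) = ∫₀¹ t^γ(1-t)^γ f(t m_{j+1} + (1-t) m_{j+2}) dt (j = 1,2,3) together with the three edge averages form a unisolvent set of six degrees of freedom for polynomials of degree ≤ 2: any p ∈ ℙ₂ annihilated by all six functionals is zero. -/

import Mathlib

open MeasureTheory intervalIntegral Set


lemma Kab_complex (a b : ℝ) :
    Complex.betaIntegral (a+1) (b+1) =
      ((∫ x in (0:ℝ)..1, x^a*(1-x)^b : ℝ) : ℂ) := by
  rw [Complex.betaIntegral, ← intervalIntegral.integral_ofReal]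
  apply intervalIntegral.integral_congr
  intro x hx
  rw [Set.uIcc_of_le (by norm_num : (0:ℝ) ≤ 1)] at hx
  have h1 : (0:ℝ) ≤ x := hx.1
  have h2 : (0:ℝ) ≤ 1 - x := by linarith [hx.2]
  dsimp only
  rw [show ((a:ℂ)+1-1) = (a:ℂ) by ring, show ((b:ℂ)+1-1) = (b:ℂ) by ring,
    ← Complex.ofReal_cpow h1,
    show ((1:ℂ) - (x:ℂ)) = (((1 - x : ℝ)):ℂ) by push_cast; ring,
    ← Complex.ofReal_cpow h2]
  push_cast
  ring

lemma Kab_integrable {a b : ℝ} (ha : -1 < a) (hb : -1 < b) :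
    IntervalIntegrable (fun x : ℝ => x^a*(1-x)^b) volume 0 1 := by
  have h := Complex.betaIntegral_convergent (u := (a:ℂ)+1) (v := (b:ℂ)+1)
    (by simp; linarith) (by simp; linarith)
  have h' : IntervalIntegrable
      (fun x : ℝ => ((x:ℂ) ^ ((a:ℂ)+1-1) * (1-(x:ℂ)) ^ ((b:ℂ)+1-1)).re) volume 0 1 :=
    ⟨h.1.re, h.2.re⟩
  apply h'.congr
  intro x hx
  dsimp only
  rw [Set.uIoc_of_le (by norm_num : (0:ℝ) ≤ 1)] at hx
  have h1 : (0:ℝ) ≤ x := le_of_lt hx.1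
  have h2 : (0:ℝ) ≤ 1 - x := by linarith [hx.2]
  rw [show (a:ℂ)+1-1 = (a:ℂ) by ring, show (b:ℂ)+1-1 = (b:ℂ) by ring,
    ← Complex.ofReal_cpow h1, ← Complex.ofReal_one]
  rw [← Complex.ofReal_sub, ← Complex.ofReal_cpow h2, ← Complex.ofReal_mul,
    Complex.ofReal_re]

lemma Kab_rec {a b : ℝ} (ha : -1 < a) (hb : -1 < b) :
    (a+1) * (∫ x in (0:ℝ)..1, x^a*(1-x)^(b+1)) =
      (b+1) * (∫ x in (0:ℝ)..1, x^(a+1)*(1-x)^b) := by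
  have h := Complex.betaIntegral_recurrence (u := (a:ℂ)+1) (v := (b:ℂ)+1)
    (by simp; linarith) (by simp; linarith)
  have e1 : ((a:ℂ)+1) = ((a:ℝ)+1 : ℝ) := by push_cast; ring
  have e2 : ((b:ℂ)+1+1) = ((b+1:ℝ)+1 : ℝ) := by push_cast; ring
  have e3 : ((a:ℂ)+1+1) = ((a+1:ℝ)+1 : ℝ) := by push_cast; ring
  have e4 : ((b:ℂ)+1) = ((b:ℝ)+1 : ℝ) := by push_cast; ring
  rw [show ((b:ℂ)+1+1 : ℂ) = ((b+1:ℝ):ℂ)+1 by push_cast; ring,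
      show ((a:ℂ)+1+1 : ℂ) = ((a+1:ℝ):ℂ)+1 by push_cast; ring] at h
  rw [Kab_complex a (b+1), Kab_complex (a+1) b] at h
  have := h
  rw [show ((a:ℂ)+1) = (((a+1:ℝ)):ℂ) by push_cast; ring,
     show ((b:ℂ)+1) = (((b+1:ℝ)):ℂ) by push_cast; ring,
     ← Complex.ofReal_mul, ← Complex.ofReal_mul] at this
  exact_mod_cast this

lemma Kab_pos {a b : ℝ} (ha : -1 < a) (hb : -1 < b) :
    0 < ∫ x in (0:ℝ)..1, x^a*(1-x)^b := by
  apply intervalIntegral.intervalIntegral_pos_of_pos_on (Kab_integrable ha hb)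
  · intro x hx
    have h1 : (0:ℝ) < x := hx.1
    have h2 : (0:ℝ) < 1 - x := by linarith [hx.2]
    positivity
  · norm_num

lemma Kab_symm (a b : ℝ) :
    (∫ x in (0:ℝ)..1, x^a*(1-x)^b) = ∫ x in (0:ℝ)..1, x^b*(1-x)^a := by
  have := intervalIntegral.integral_comp_sub_left (a := 0) (b := 1)
    (fun x : ℝ => x^b*(1-x)^a) 1
  norm_num at this
  rw [← this]
  apply intervalIntegral.integral_congr
  intro x _
  dsimp only
  ring

lemma Kab_sum {a b : ℝ} (ha : -1 < a) (hb : -1 < b) :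
    (∫ x in (0:ℝ)..1, x^(a+1)*(1-x)^b) + (∫ x in (0:ℝ)..1, x^a*(1-x)^(b+1)) =
      ∫ x in (0:ℝ)..1, x^a*(1-x)^b := by
  rw [← intervalIntegral.integral_add (Kab_integrable (by linarith) hb)
    (Kab_integrable ha (by linarith))]
  apply intervalIntegral.integral_congr_ae
  filter_upwards with x hx
  rw [Set.uIoc_of_le (by norm_num : (0:ℝ) ≤ 1)] at hx
  have h1 : (0:ℝ) < x := hx.1
  rw [Real.rpow_add h1, Real.rpow_one]
  by_cases hx1 : x = 1
  · subst hx1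
    rw [show (1:ℝ)-1 = 0 by ring,
      Real.zero_rpow (by linarith : (0:ℝ) < b + 1).ne']
    simp [Real.one_rpow]
  · have h2 : (0:ℝ) < 1 - x := lt_of_le_of_ne (by linarith [hx.2]) (by intro h; apply hx1; linarith)
    rw [Real.rpow_add h2, Real.rpow_one]
    ring

lemma lin_int (α β δ : ℝ) :
    (∫ t in (0:ℝ)..1, (α + β*t + δ*t^2)) = α + β/2 + δ/3 := by
  have h1 : IntervalIntegrable (fun t : ℝ => α + β*t) volume 0 1 :=
    Continuous.intervalIntegrable (by continuity) _ _
  have h2 : IntervalIntegrable (fun t : ℝ => δ*t^2) volume 0 1 :=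
    Continuous.intervalIntegrable (by continuity) _ _
  have h3 : IntervalIntegrable (fun t : ℝ => (α:ℝ)) volume 0 1 :=
    Continuous.intervalIntegrable (by continuity) _ _
  have h4 : IntervalIntegrable (fun t : ℝ => β*t) volume 0 1 :=
    Continuous.intervalIntegrable (by continuity) _ _
  rw [show (fun t : ℝ => α + β*t + δ*t^2) = fun t : ℝ => (α + β*t) + δ*t^2 from rfl]
  rw [intervalIntegral.integral_add h1 h2, intervalIntegral.integral_add h3 h4,
    intervalIntegral.integral_const_mul, intervalIntegral.integral_const_mul,
    integral_id, integral_pow]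
  norm_num
  ring

lemma wint {γ : ℝ} (hγ : -1 < γ) (α β δ : ℝ) :
    (∫ t in (0:ℝ)..1, t^γ*(1-t)^γ*(α+β*t+δ*t^2)) =
      α*(∫ t in (0:ℝ)..1, t^γ*(1-t)^γ) + β*(∫ t in (0:ℝ)..1, t^(γ+1)*(1-t)^γ)
        + δ*(∫ t in (0:ℝ)..1, t^(γ+2)*(1-t)^γ) := by
  have i0 := Kab_integrable hγ hγ
  have i1 := Kab_integrable (by linarith : (-1:ℝ) < γ+1) hγ
  have i2 := Kab_integrable (by linarith : (-1:ℝ) < γ+2) hγ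
  have step : (∫ t in (0:ℝ)..1, t^γ*(1-t)^γ*(α+β*t+δ*t^2)) =
      ∫ t in (0:ℝ)..1, (α*(t^γ*(1-t)^γ) + β*(t^(γ+1)*(1-t)^γ) + δ*(t^(γ+2)*(1-t)^γ)) := by
    apply intervalIntegral.integral_congr_ae
    filter_upwards with t ht
    rw [Set.uIoc_of_le (by norm_num : (0:ℝ) ≤ 1)] at ht
    have h1 : (0:ℝ) < t := ht.1
    rw [show γ+2 = γ+1+1 by ring, Real.rpow_add h1 (γ+1) 1,
      Real.rpow_add h1 γ 1, Real.rpow_one]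
    ring
  rw [step, intervalIntegral.integral_add ((i0.const_mul α).add (i1.const_mul β))
      (i2.const_mul δ),
    intervalIntegral.integral_add (i0.const_mul α) (i1.const_mul β),
    intervalIntegral.integral_const_mul, intervalIntegral.integral_const_mul,
    intervalIntegral.integral_const_mul]


/-- quadratic in two variables -/
def Gq (A B C D E F X Y : ℝ) : ℝ :=
  A + B*X + C*Y + D*X^2 + E*(X*Y) + F*Y^2

lemma quad_decomp (p : MvPolynomial (Fin 2) ℝ) (hp : p.totalDegree ≤ 2) :
    ∃ A B C D E F : ℝ, ∀ x : Fin 2 → ℝ,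
      MvPolynomial.eval x p = Gq A B C D E F (x 0) (x 1) := by
  classical
  have key : ∀ S : Finset (Fin 2 →₀ ℕ), (∀ m ∈ S, m 0 + m 1 ≤ 2) →
      ∃ A B C D E F : ℝ, ∀ x : Fin 2 → ℝ,
        MvPolynomial.eval x (∑ m ∈ S, MvPolynomial.monomial m (MvPolynomial.coeff m p))
          = Gq A B C D E F (x 0) (x 1) := by
    intro S
    induction S using Finset.induction_on with
    | empty =>
      intro _
      exact ⟨0,0,0,0,0,0, by simp [Gq]⟩
    | @insert m S' hm ih =>
      intro hS
      obtain ⟨A,B,C,D,E,F,hrest⟩ := ih (fun m' hm' => hS m' (Finset.mem_insert_of_mem hm'))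
      have hdeg : m 0 + m 1 ≤ 2 := hS m (Finset.mem_insert_self m S')
      set c := MvPolynomial.coeff m p with hc
      have heval : ∀ x : Fin 2 → ℝ,
          MvPolynomial.eval x (MvPolynomial.monomial m c) = c * x 0 ^ (m 0) * x 1 ^ (m 1) := by
        intro x
        rw [MvPolynomial.eval_monomial]
        rw [Finsupp.prod_fintype _ _ (fun i => pow_zero (x i))]
        rw [Fin.prod_univ_two]
        ring
      have hmono : ∃ A' B' C' D' E' F' : ℝ, ∀ x : Fin 2 → ℝ,
          c * x 0 ^ (m 0) * x 1 ^ (m 1) = Gq A' B' C' D' E' F' (x 0) (x 1) := by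
        have h0 : m 0 ≤ 2 := by omega
        have h1 : m 1 ≤ 2 := by omega
        interval_cases h : (m 0) <;> interval_cases h' : (m 1) <;>
          first
          | (refine ⟨c,0,0,0,0,0, fun x => ?_⟩; simp only [Gq]; ring1)
          | (refine ⟨0,c,0,0,0,0, fun x => ?_⟩; simp only [Gq]; ring1)
          | (refine ⟨0,0,c,0,0,0, fun x => ?_⟩; simp only [Gq]; ring1)
          | (refine ⟨0,0,0,c,0,0, fun x => ?_⟩; simp only [Gq]; ring1)
          | (refine ⟨0,0,0,0,c,0, fun x => ?_⟩; simp only [Gq]; ring1)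
          | (refine ⟨0,0,0,0,0,c, fun x => ?_⟩; simp only [Gq]; ring1)
          | omega
      obtain ⟨A',B',C',D',E',F',hmono'⟩ := hmono
      refine ⟨A+A', B+B', C+C', D+D', E+E', F+F', fun x => ?_⟩
      rw [Finset.sum_insert hm, map_add, hrest, heval, hmono' x]
      simp only [Gq]; ring
  have hSdeg : ∀ m ∈ p.support, m 0 + m 1 ≤ 2 := by
    intro m hm
    have := MvPolynomial.le_totalDegree hm
    have hsum : (m.sum fun _ e => e) = m 0 + m 1 := by
      rw [Finsupp.sum_fintype _ _ (fun i => rfl), Fin.sum_univ_two]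
    omega
  obtain ⟨A,B,C,D,E,F,h⟩ := key p.support hSdeg
  exact ⟨A,B,C,D,E,F, fun x => by rw [p.as_sum]; exact h x⟩

lemma Gq_seg (A B C D E F pX pY qX qY t : ℝ) :
    Gq A B C D E F (t*pX + (1-t)*qX) (t*pY + (1-t)*qY) =
      Gq A B C D E F qX qY
      + (4*Gq A B C D E F ((pX+qX)/2) ((pY+qY)/2) - 3*Gq A B C D E F qX qY
          - Gq A B C D E F pX pY)*t
      + (2*Gq A B C D E F qX qY + 2*Gq A B C D E F pX pY
          - 4*Gq A B C D E F ((pX+qX)/2) ((pY+qY)/2))*t^2 := by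
  simp only [Gq]; ring1

lemma reduce_w {γ J0 J1 J2 α β δ : ℝ} (hJ0 : 0 < J0) (hJ1 : 2*J1 = J0)
    (hJ2 : (2*γ+3)*J2 = (γ+2)*J1) (h : α*J0 + β*J1 + δ*J2 = 0) :
    2*(2*γ+3)*α + (2*γ+3)*β + (γ+2)*δ = 0 := by
  have h9 : J0 * (2*(2*γ+3)*α + (2*γ+3)*β + (γ+2)*δ) = 0 := by
    linear_combination 2*(2*γ+3)*h - ((2*γ+3)*β + (γ+2)*δ)*hJ1 - 2*δ*hJ2
  exact (mul_eq_zero.mp h9).resolve_left hJ0.ne'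

lemma det_ne (v : Fin 3 → (Fin 2 → ℝ)) (hv : AffineIndependent ℝ v) :
    (v 1 0 - v 0 0)*(v 2 1 - v 0 1) - (v 1 1 - v 0 1)*(v 2 0 - v 0 0) ≠ 0 := by
  intro hdet
  rw [affineIndependent_iff] at hv
  have key : ∀ α β : ℝ,
      α*(v 1 0 - v 0 0) + β*(v 2 0 - v 0 0) = 0 →
      α*(v 1 1 - v 0 1) + β*(v 2 1 - v 0 1) = 0 → α = 0 ∧ β = 0 := by
    intro α β k0 k1
    have h := hv Finset.univ ![-(α+β), α, β] (by
        rw [Fin.sum_univ_three]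
        simp only [Matrix.cons_val_zero, Matrix.cons_val_one, Matrix.head_cons,
          Matrix.cons_val_two, Matrix.tail_cons]
        ring)
      (by
        rw [Fin.sum_univ_three]
        funext i
        simp only [Matrix.cons_val_zero, Matrix.cons_val_one, Matrix.head_cons,
          Matrix.cons_val_two, Matrix.tail_cons, Pi.add_apply, Pi.smul_apply,
          smul_eq_mul, Pi.zero_apply]
        fin_cases i
        · simp only [Fin.mk_zero, Fin.isValue]
          linear_combination k0
        · simp only [Fin.mk_one, Fin.isValue]
          linear_combination k1)
    exact ⟨h 1 (Finset.mem_univ 1), h 2 (Finset.mem_univ 2)⟩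
  obtain ⟨h1, h2⟩ := key (v 2 1 - v 0 1) (-(v 1 1 - v 0 1))
    (by linear_combination hdet) (by ring)
  obtain ⟨h3, h4⟩ := key (v 2 0 - v 0 0) (-(v 1 0 - v 0 0))
    (by ring) (by linear_combination -hdet)
  have h2' : v 1 1 - v 0 1 = 0 := by linarith [neg_eq_zero.mp h2]
  have h4' : v 1 0 - v 0 0 = 0 := by linarith [neg_eq_zero.mp h4]
  have := hv Finset.univ ![(1:ℝ), -1, 0] (by
      rw [Fin.sum_univ_three]
      simp only [Matrix.cons_val_zero, Matrix.cons_val_one, Matrix.head_cons,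
        Matrix.cons_val_two, Matrix.tail_cons]
      ring)
    (by
      rw [Fin.sum_univ_three]
      funext i
      simp only [Matrix.cons_val_zero, Matrix.cons_val_one, Matrix.head_cons,
        Matrix.cons_val_two, Matrix.tail_cons, Pi.add_apply, Pi.smul_apply,
        smul_eq_mul, Pi.zero_apply]
      fin_cases i
      · simp only [Fin.mk_zero, Fin.isValue]
        linear_combination -h4'
      · simp only [Fin.mk_one, Fin.isValue]
        linear_combination -h2') 0 (Finset.mem_univ 0)
  norm_num at this

/-- Edge midpoints of the triangle. -/
noncomputable def midpt (v : Fin 3 → (Fin 2 → ℝ)) (j : Fin 3) : Fin 2 → ℝ :=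
  (v (j + 1) + v (j + 2)) / 2


theorem first_class_unisolvence
    (v : Fin 3 → (Fin 2 → ℝ)) (hv : AffineIndependent ℝ v)
    (γ : ℝ) (hγ : -1 < γ) (hγ0 : γ ≠ 0)
    (p : MvPolynomial (Fin 2) ℝ) (hp : p.totalDegree ≤ 2)
    (hedge : ∀ j : Fin 3,
      (∫ t in (0:ℝ)..1,
        MvPolynomial.eval (t • v (j + 1) + (1 - t) • v (j + 2)) p) = 0)
    (hF : ∀ j : Fin 3,
      (∫ t in (0:ℝ)..1, t ^ γ * (1 - t) ^ γ *
        MvPolynomial.eval (t • midpt v (j + 1) + (1 - t) • midpt v (j + 2)) p) = 0) :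
    p = 0 := by
  obtain ⟨A, B, C, D, E, F, hg⟩ := quad_decomp p hp
  -- beta-integral facts
  have hJ1 : 2*(∫ t in (0:ℝ)..1, t^(γ+1)*(1-t)^γ) = ∫ t in (0:ℝ)..1, t^γ*(1-t)^γ := by
    have hs := Kab_sum hγ hγ
    have hsym := Kab_symm γ (γ+1)
    linarith
  have hrec := Kab_rec (show (-1:ℝ) < γ+1 by linarith) hγ
  have hs2 := Kab_sum (show (-1:ℝ) < γ+1 by linarith) hγ
  rw [show γ+1+1 = γ+2 from by ring] at hrec hs2
  have hJ2 : (2*γ+3)*(∫ t in (0:ℝ)..1, t^(γ+2)*(1-t)^γ)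
      = (γ+2)*(∫ t in (0:ℝ)..1, t^(γ+1)*(1-t)^γ) := by
    linear_combination (γ+2)*hs2 - hrec
  have hJ0pos := Kab_pos hγ hγ
  have hfin : ((0:Fin 3)+1 = 1) ∧ ((0:Fin 3)+2 = 2) ∧ ((1:Fin 3)+1 = 2) ∧ ((1:Fin 3)+2 = 0)
      ∧ ((2:Fin 3)+1 = 0) ∧ ((2:Fin 3)+2 = 1) := by decide
  obtain ⟨hf1, hf2, hf3, hf4, hf5, hf6⟩ := hfin
  -- process the three edge conditions
  have edge0 : _ := hedge 0
  simp only [hf1, hf2, hf3, hf4, hf5, hf6, hg, Pi.add_apply, Pi.smul_apply,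
    smul_eq_mul] at edge0
  simp only [Gq_seg] at edge0
  rw [lin_int] at edge0
  simp only [Gq] at edge0
  have edge1 : _ := hedge 1
  simp only [hf1, hf2, hf3, hf4, hf5, hf6, hg, Pi.add_apply, Pi.smul_apply,
    smul_eq_mul] at edge1
  simp only [Gq_seg] at edge1
  rw [lin_int] at edge1
  simp only [Gq] at edge1
  have edge2 : _ := hedge 2
  simp only [hf1, hf2, hf3, hf4, hf5, hf6, hg, Pi.add_apply, Pi.smul_apply,
    smul_eq_mul] at edge2
  simp only [Gq_seg] at edge2
  rw [lin_int] at edge2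
  simp only [Gq] at edge2
  -- process the three weighted conditions
  have wraw0 : _ := hF 0
  simp only [midpt, hf1, hf2, hf3, hf4, hf5, hf6, hg, Pi.add_apply, Pi.smul_apply,
    smul_eq_mul, Pi.div_apply, Pi.ofNat_apply] at wraw0
  simp only [Gq_seg] at wraw0
  rw [wint hγ] at wraw0
  have w0 := reduce_w hJ0pos hJ1 hJ2 wraw0
  simp only [Gq] at w0
  have wraw1 : _ := hF 1
  simp only [midpt, hf1, hf2, hf3, hf4, hf5, hf6, hg, Pi.add_apply, Pi.smul_apply,
    smul_eq_mul, Pi.div_apply, Pi.ofNat_apply] at wraw1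
  simp only [Gq_seg] at wraw1
  rw [wint hγ] at wraw1
  have w1 := reduce_w hJ0pos hJ1 hJ2 wraw1
  simp only [Gq] at w1
  have wraw2 : _ := hF 2
  simp only [midpt, hf1, hf2, hf3, hf4, hf5, hf6, hg, Pi.add_apply, Pi.smul_apply,
    smul_eq_mul, Pi.div_apply, Pi.ofNat_apply] at wraw2
  simp only [Gq_seg] at wraw2
  rw [wint hγ] at wraw2
  have w2 := reduce_w hJ0pos hJ1 hJ2 wraw2
  simp only [Gq] at w2
  have hT0 : (2*γ+3)*((A + B*((v 2 0 + v 0 0)/2) + C*((v 2 1 + v 0 1)/2) + D*((v 2 0 + v 0 0)/2)^2 + E*(((v 2 0 + v 0 0)/2)*((v 2 1 + v 0 1)/2)) + F*((v 2 1 + v 0 1)/2)^2) + (A + B*((v 0 0 + v 1 0)/2) + C*((v 0 1 + v 1 1)/2) + D*((v 0 0 + v 1 0)/2)^2 + E*(((v 0 0 + v 1 0)/2)*((v 0 1 + v 1 1)/2)) + F*((v 0 1 + v 1 1)/2)^2)) + 3*(γ+1)*(A + B*((v 1 0 + v 2 0)/2) + C*((v 1 1 + v 2 1)/2) + D*((v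 1 0 + v 2 0)/2)^2 + E*(((v 1 0 + v 2 0)/2)*((v 1 1 + v 2 1)/2)) + F*((v 1 1 + v 2 1)/2)^2) = 0 := by
    linear_combination w0 + 3*(γ+1)*edge0
  have hT1 : (2*γ+3)*((A + B*((v 0 0 + v 1 0)/2) + C*((v 0 1 + v 1 1)/2) + D*((v 0 0 + v 1 0)/2)^2 + E*(((v 0 0 + v 1 0)/2)*((v 0 1 + v 1 1)/2)) + F*((v 0 1 + v 1 1)/2)^2) + (A + B*((v 1 0 + v 2 0)/2) + C*((v 1 1 + v 2 1)/2) + D*((v 1 0 + v 2 0)/2)^2 + E*(((v 1 0 + v 2 0)/2)*((v 1 1 + v 2 1)/2)) + F*((v 1 1 + v 2 1)/2)^2)) + 3*(γ+1)*(A + B*((v 2 0 + v 0 0)/2) + C*((v 2 1 + v 0 1)/2) + D*((v 2 0 + v 0 0)/2)^2 + E*(((v 2 0 + v 0 0)/2)*((v 2 1 + v 0 1)/2)) + F*((v 2 1 + v 0 1)/2)^2) = 0 := by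
    linear_combination w1 + 3*(γ+1)*edge1
  have hT2 : (2*γ+3)*((A + B*((v 1 0 + v 2 0)/2) + C*((v 1 1 + v 2 1)/2) + D*((v 1 0 + v 2 0)/2)^2 + E*(((v 1 0 + v 2 0)/2)*((v 1 1 + v 2 1)/2)) + F*((v 1 1 + v 2 1)/2)^2) + (A + B*((v 2 0 + v 0 0)/2) + C*((v 2 1 + v 0 1)/2) + D*((v 2 0 + v 0 0)/2)^2 + E*(((v 2 0 + v 0 0)/2)*((v 2 1 + v 0 1)/2)) + F*((v 2 1 + v 0 1)/2)^2)) + 3*(γ+1)*(A + B*((v 0 0 + v 1 0)/2) + C*((v 0 1 + v 1 1)/2) + D*((v 0 0 + v 1 0)/2)^2 + E*(((v 0 0 + v 1 0)/2)*((v 0 1 + v 1 1)/2)) + F*((v 0 1 + v 1 1)/2)^2) = 0 := by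
    linear_combination w2 + 3*(γ+1)*edge2
  have hsum7 : (7*γ+9)*((A + B*((v 1 0 + v 2 0)/2) + C*((v 1 1 + v 2 1)/2) + D*((v 1 0 + v 2 0)/2)^2 + E*(((v 1 0 + v 2 0)/2)*((v 1 1 + v 2 1)/2)) + F*((v 1 1 + v 2 1)/2)^2) + (A + B*((v 2 0 + v 0 0)/2) + C*((v 2 1 + v 0 1)/2) + D*((v 2 0 + v 0 0)/2)^2 + E*(((v 2 0 + v 0 0)/2)*((v 2 1 + v 0 1)/2)) + F*((v 2 1 + v 0 1)/2)^2) + (A + B*((v 0 0 + v 1 0)/2) + C*((v 0 1 + v 1 1)/2) + D*((v 0 0 + v 1 0)/2)^2 + E*(((v 0 0 + v 1 0)/2)*((v 0 1 + v 1 1)/2)) + F*((v 0 1 + v 1 1)/2)^2)) = 0 := by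
    linear_combination hT0 + hT1 + hT2
  have hbsum : (A + B*((v 1 0 + v 2 0)/2) + C*((v 1 1 + v 2 1)/2) + D*((v 1 0 + v 2 0)/2)^2 + E*(((v 1 0 + v 2 0)/2)*((v 1 1 + v 2 1)/2)) + F*((v 1 1 + v 2 1)/2)^2) + (A + B*((v 2 0 + v 0 0)/2) + C*((v 2 1 + v 0 1)/2) + D*((v 2 0 + v 0 0)/2)^2 + E*(((v 2 0 + v 0 0)/2)*((v 2 1 + v 0 1)/2)) + F*((v 2 1 + v 0 1)/2)^2) + (A + B*((v 0 0 + v 1 0)/2) + C*((v 0 1 + v 1 1)/2) + D*((v 0 0 + v 1 0)/2)^2 + E*(((v 0 0 + v 1 0)/2)*((v 0 1 + v 1 1)/2)) + F*((v 0 1 + v 1 1)/2)^2) = 0 :=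
    (mul_eq_zero.mp hsum7).resolve_left (ne_of_gt (by linarith : (0:ℝ) < 7*γ+9))
  have hgb0 : γ * (A + B*((v 1 0 + v 2 0)/2) + C*((v 1 1 + v 2 1)/2) + D*((v 1 0 + v 2 0)/2)^2 + E*(((v 1 0 + v 2 0)/2)*((v 1 1 + v 2 1)/2)) + F*((v 1 1 + v 2 1)/2)^2) = 0 := by
    linear_combination hT0 - (2*γ+3)*hbsum
  have hb0 : (A + B*((v 1 0 + v 2 0)/2) + C*((v 1 1 + v 2 1)/2) + D*((v 1 0 + v 2 0)/2)^2 + E*(((v 1 0 + v 2 0)/2)*((v 1 1 + v 2 1)/2)) + F*((v 1 1 + v 2 1)/2)^2) = 0 := (mul_eq_zero.mp hgb0).resolve_left hγ0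
  have hgb1 : γ * (A + B*((v 2 0 + v 0 0)/2) + C*((v 2 1 + v 0 1)/2) + D*((v 2 0 + v 0 0)/2)^2 + E*(((v 2 0 + v 0 0)/2)*((v 2 1 + v 0 1)/2)) + F*((v 2 1 + v 0 1)/2)^2) = 0 := by
    linear_combination hT1 - (2*γ+3)*hbsum
  have hb1 : (A + B*((v 2 0 + v 0 0)/2) + C*((v 2 1 + v 0 1)/2) + D*((v 2 0 + v 0 0)/2)^2 + E*(((v 2 0 + v 0 0)/2)*((v 2 1 + v 0 1)/2)) + F*((v 2 1 + v 0 1)/2)^2) = 0 := (mul_eq_zero.mp hgb1).resolve_left hγ0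
  have hgb2 : γ * (A + B*((v 0 0 + v 1 0)/2) + C*((v 0 1 + v 1 1)/2) + D*((v 0 0 + v 1 0)/2)^2 + E*(((v 0 0 + v 1 0)/2)*((v 0 1 + v 1 1)/2)) + F*((v 0 1 + v 1 1)/2)^2) = 0 := by
    linear_combination hT2 - (2*γ+3)*hbsum
  have hb2 : (A + B*((v 0 0 + v 1 0)/2) + C*((v 0 1 + v 1 1)/2) + D*((v 0 0 + v 1 0)/2)^2 + E*(((v 0 0 + v 1 0)/2)*((v 0 1 + v 1 1)/2)) + F*((v 0 1 + v 1 1)/2)^2) = 0 := (mul_eq_zero.mp hgb2).resolve_left hγ0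
  have ha0 : (A + B*v 0 0 + C*v 0 1 + D*v 0 0^2 + E*(v 0 0*v 0 1) + F*v 0 1^2) = 0 := by
    linear_combination 3*edge1 + 3*edge2 - 3*edge0 - 2*hb1 - 2*hb2 + 2*hb0
  have ha1 : (A + B*v 1 0 + C*v 1 1 + D*v 1 0^2 + E*(v 1 0*v 1 1) + F*v 1 1^2) = 0 := by
    linear_combination 3*edge2 + 3*edge0 - 3*edge1 - 2*hb2 - 2*hb0 + 2*hb1
  have ha2 : (A + B*v 2 0 + C*v 2 1 + D*v 2 0^2 + E*(v 2 0*v 2 1) + F*v 2 1^2) = 0 := by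
    linear_combination 3*edge0 + 3*edge1 - 3*edge2 - 2*hb0 - 2*hb1 + 2*hb2
  have hQa : D*(v 1 0 - v 0 0)^2 + E*((v 1 0 - v 0 0)*(v 1 1 - v 0 1)) + F*(v 1 1 - v 0 1)^2 = 0 := by
    linear_combination 2*ha0 + 2*ha1 - 4*hb2
  have hQb : D*(v 2 0 - v 0 0)^2 + E*((v 2 0 - v 0 0)*(v 2 1 - v 0 1)) + F*(v 2 1 - v 0 1)^2 = 0 := by
    linear_combination 2*ha2 + 2*ha0 - 4*hb1
  have hQc : D*(v 1 0 - v 2 0)^2 + E*((v 1 0 - v 2 0)*(v 1 1 - v 2 1)) + F*(v 1 1 - v 2 1)^2 = 0 := by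
    linear_combination 2*ha1 + 2*ha2 - 4*hb0
  have hX : 2*D*((v 1 0 - v 0 0)*(v 2 0 - v 0 0)) + E*((v 1 0 - v 0 0)*(v 2 1 - v 0 1) + (v 1 1 - v 0 1)*(v 2 0 - v 0 0)) + 2*F*((v 1 1 - v 0 1)*(v 2 1 - v 0 1)) = 0 := by
    linear_combination hQa + hQb - hQc
  have hall : ∀ α β : ℝ,
      D*(α*(v 1 0 - v 0 0)+β*(v 2 0 - v 0 0))^2 + E*((α*(v 1 0 - v 0 0)+β*(v 2 0 - v 0 0))*(α*(v 1 1 - v 0 1)+β*(v 2 1 - v 0 1))) + F*(α*(v 1 1 - v 0 1)+β*(v 2 1 - v 0 1))^2 = 0 := by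
    intro α β
    linear_combination α^2*hQa + β^2*hQb + (α*β)*hX
  have hdet := det_ne v hv
  set dt := (v 1 0 - v 0 0)*(v 2 1 - v 0 1) - (v 1 1 - v 0 1)*(v 2 0 - v 0 0) with hdt
  have hD : D = 0 := by
    have h := hall ((v 2 1 - v 0 1)/dt) (-(v 1 1 - v 0 1)/dt)
    rw [show ((v 2 1 - v 0 1)/dt*(v 1 0 - v 0 0) + -(v 1 1 - v 0 1)/dt*(v 2 0 - v 0 0)) = 1 from by field_simp; linear_combination hdt,
      show ((v 2 1 - v 0 1)/dt*(v 1 1 - v 0 1) + -(v 1 1 - v 0 1)/dt*(v 2 1 - v 0 1)) = 0 from by field_simp; ring] at h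
    linear_combination h
  have hFz : F = 0 := by
    have h := hall (-(v 2 0 - v 0 0)/dt) ((v 1 0 - v 0 0)/dt)
    rw [show (-(v 2 0 - v 0 0)/dt*(v 1 0 - v 0 0) + (v 1 0 - v 0 0)/dt*(v 2 0 - v 0 0)) = 0 from by field_simp; ring,
      show (-(v 2 0 - v 0 0)/dt*(v 1 1 - v 0 1) + (v 1 0 - v 0 0)/dt*(v 2 1 - v 0 1)) = 1 from by field_simp; linear_combination hdt] at h
    linear_combination h
  have hEz : E = 0 := by
    have h := hall (((v 2 1 - v 0 1)-(v 2 0 - v 0 0))/dt) (((v 1 0 - v 0 0)-(v 1 1 - v 0 1))/dt)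
    rw [show (((v 2 1 - v 0 1)-(v 2 0 - v 0 0))/dt*(v 1 0 - v 0 0) + ((v 1 0 - v 0 0)-(v 1 1 - v 0 1))/dt*(v 2 0 - v 0 0)) = 1 from by
        field_simp; linear_combination hdt,
      show (((v 2 1 - v 0 1)-(v 2 0 - v 0 0))/dt*(v 1 1 - v 0 1) + ((v 1 0 - v 0 0)-(v 1 1 - v 0 1))/dt*(v 2 1 - v 0 1)) = 1 from by
        field_simp; linear_combination hdt] at h
    linear_combination h - hD - hFz
  have hL0 : A + B*v 0 0 + C*v 0 1 = 0 := by
    linear_combination ha0 - (v 0 0^2)*hD - (v 0 0*v 0 1)*hEz - (v 0 1^2)*hFz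
  have hL1 : A + B*v 1 0 + C*v 1 1 = 0 := by
    linear_combination ha1 - (v 1 0^2)*hD - (v 1 0*v 1 1)*hEz - (v 1 1^2)*hFz
  have hL2 : A + B*v 2 0 + C*v 2 1 = 0 := by
    linear_combination ha2 - (v 2 0^2)*hD - (v 2 0*v 2 1)*hEz - (v 2 1^2)*hFz
  have hBdt : B * dt = 0 := by linear_combination (v 2 1 - v 0 1)*(hL1 - hL0) - (v 1 1 - v 0 1)*(hL2 - hL0)
  have hCdt : C * dt = 0 := by linear_combination (v 1 0 - v 0 0)*(hL2 - hL0) - (v 2 0 - v 0 0)*(hL1 - hL0)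
  have hB : B = 0 := (mul_eq_zero.mp hBdt).resolve_right hdet
  have hC : C = 0 := (mul_eq_zero.mp hCdt).resolve_right hdet
  have hA : A = 0 := by linear_combination hL0 - v 0 0*hB - v 0 1*hC
  apply MvPolynomial.funext
  intro xx
  rw [hg xx, map_zero, hA, hB, hC, hD, hEz, hFz]
  simp [Gq]
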